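/- A linear map D : V → V is an antiderivation of the Leibniz algebra L₁₈ if and only if D(e₁) and D(e₂) are arbitrary vectors of V, and, writing a for the coefficient of e₁ in D(e₁), c for the coefficient of e₂ in D(e₁), and b for the coefficient of e₂ in D(e₂), one has D(e₃) = (a+b)·e₃ − c·e₄ and D(e₄) = 0. Consequently, the space of antiderivations of L₁₈ is an 8-dimensional linear subspace of End(V). -/
import Mathlib


/-- `V = ℂ⁴`. -/
abbrev V : Type := Fin 4 → ℂ

/-- standard basis: `e 0 = e₁`, ..., `e 3 = e₄`. -/
def e (i : Fin 4) : V := Pi.single i 1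

/-- Bracket of the Leibniz algebra `L₁₈`:
`⟦e₁,e₂⟧ = e₃`, `⟦e₂,e₁⟧ = -e₃`, `⟦e₂,e₂⟧ = e₄`, all other basis products zero. -/
def br (x y : V) : V :=
  (x 0 * y 1 - x 1 * y 0) • e 2 + (x 1 * y 1) • e 3

/-- An antiderivation. -/
def IsAntiDer (D : V →ₗ[ℂ] V) : Prop :=
  ∀ x y : V, D (br x y) = br x (D y) - br y (D x)

lemma v_decomp (v : V) : v = v 0 • e 0 + v 1 • e 1 + v 2 • e 2 + v 3 • e 3 := by
  funext i
  fin_cases i <;> simp [e, Pi.single_apply]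

lemma D_apply (D : V →ₗ[ℂ] V) (v : V) :
    D v = v 0 • D (e 0) + v 1 • D (e 1) + v 2 • D (e 2) + v 3 • D (e 3) := by
  conv_lhs => rw [v_decomp v]
  simp

lemma br_add (x u w : V) : br x (u + w) = br x u + br x w := by
  funext i; simp [br]; ring

lemma br_smul (x : V) (c : ℂ) (u : V) : br x (c • u) = c • br x u := by
  funext i; simp [br]; ring

lemma br_zero (x : V) : br x 0 = 0 := by
  funext i; simp [br]

lemma antider_iff (D : V →ₗ[ℂ] V) : IsAntiDer D ↔
    D (e 2) = (D (e 0) 0 + D (e 1) 1) • e 2 - (D (e 0) 1) • e 3 ∧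
    D (e 3) = 0 := by
  constructor
  · intro H
    have h1 := H (e 0) (e 1)
    have h2 := H (e 1) (e 1)
    have hb1 : br (e 0) (e 1) = e 2 := by funext i; simp [br, e, Pi.single_apply]
    have hb2 : br (e 1) (e 1) = e 3 := by funext i; simp [br, e, Pi.single_apply]
    rw [hb1] at h1
    rw [hb2] at h2
    constructor
    · rw [h1]; funext i; fin_cases i <;> simp [br, e, Pi.single_apply] <;> ring
    · rw [h2]; abel
  · rintro ⟨h1, h2⟩ x y
    rw [D_apply D (br x y), D_apply D y, D_apply D x, h1, h2]
    funext i
    fin_cases i <;> (simp [br, e, Pi.single_apply]; try ring)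

noncomputable def mkD (u w : V) : V →ₗ[ℂ] V where
  toFun v := v 0 • u + v 1 • w + v 2 • ((u 0 + w 1) • e 2 - u 1 • e 3)
  map_add' a b := by funext i; simp; ring
  map_smul' c a := by funext i; simp; ring

noncomputable def S : Submodule ℂ (V →ₗ[ℂ] V) where
  carrier := {D | IsAntiDer D}
  add_mem' := by
    intro a b ha hb x y
    simp only [LinearMap.add_apply, ha x y, hb x y, br_add]
    abel
  zero_mem' := by
    intro x y
    simp [br_zero]
  smul_mem' := by
    intro c a ha x y
    simp only [LinearMap.smul_apply, ha x y, br_smul]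
    module

def f : S →ₗ[ℂ] V × V where
  toFun D := (D.1 (e 0), D.1 (e 1))
  map_add' a b := by simp
  map_smul' c a := by simp

lemma f_bij : Function.Bijective f := by
  constructor
  · intro ⟨D, hD⟩ ⟨D', hD'⟩ h
    simp only [f, LinearMap.coe_mk, AddHom.coe_mk, Prod.mk.injEq] at h
    obtain ⟨h0, h1⟩ := h
    have c := (antider_iff D).mp hD
    have c' := (antider_iff D').mp hD'
    apply Subtype.ext
    apply LinearMap.ext
    intro v
    rw [D_apply D v, D_apply D' v, h0, h1, c.1, c.2, c'.1, c'.2, h0, h1]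
  · rintro ⟨u, w⟩
    have hm : IsAntiDer (mkD u w) := by
      rw [antider_iff]
      constructor
      · simp [mkD, e, Pi.single_apply]
      · simp [mkD, e, Pi.single_apply]
    refine ⟨⟨mkD u w, hm⟩, ?_⟩
    simp only [f, LinearMap.coe_mk, AddHom.coe_mk]
    have h0 : mkD u w (e 0) = u := by simp [mkD, e, Pi.single_apply]
    have h1 : mkD u w (e 1) = w := by simp [mkD, e, Pi.single_apply]
    rw [h0, h1]

/-- `D e₁`, `D e₂` are arbitrary; with `a` the coefficient of `e₁` in `D e₁`,
`c` the coefficient of `e₂` in `D e₁`, and `b` the coefficient of `e₂` in `D e₂`,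
one has `D e₃ = (a+b)•e₃ - c•e₄` and `D e₄ = 0`. -/
theorem antiderivations_of_L18 :
    (∀ D : V →ₗ[ℂ] V, IsAntiDer D ↔
      D (e 2) = (D (e 0) 0 + D (e 1) 1) • e 2 - (D (e 0) 1) • e 3 ∧
      D (e 3) = 0) ∧
    ∃ S : Submodule ℂ (V →ₗ[ℂ] V),
      (S : Set (V →ₗ[ℂ] V)) = {D | IsAntiDer D} ∧ Module.finrank ℂ S = 8 := by
  refine ⟨antider_iff, S, rfl, ?_⟩
  have E := LinearEquiv.ofBijective f f_bij
  rw [E.finrank_eq]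
  simp [Module.finrank_prod]
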